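/- Let H(z) = z^m be a monomial function on ℂ_*^d (m ∈ ℤ^d). Then there exists a compact toric manifold K such that ℂ_*^d embeds into K as an open dense stratum and the function H extends from this stratum to a smooth ℙ¹-valued function on all of K. -/

import Mathlib

open Filter Topology Set Metric
open scoped Manifold
open scoped BigOperators

namespace ACSV

variable (d : ℕ)

/-- The complex torus `ℂ_*^d`, the set of points of `ℂ^d` with all coordinates nonzero. -/
def Cstar : Set (Fin d → ℂ) := {z | ∀ j, z j ≠ 0}

/-- The height (phase) function `h_r(z) = -∑_j r_j log |z_j|`. -/
noncomputable def hgt (r : Fin d → ℝ) (z : Fin d → ℂ) : ℝ :=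
  -∑ j, r j * Real.log ‖z j‖

/-- Complexification of a real vector. -/
def cx (r : Fin d → ℝ) : Fin d → ℂ := fun j => (r j : ℂ)

/-- The matrix `J(z,y)` whose first `c` rows are `z_j ∂f_i/∂z_j` and whose last row is `y`. -/
noncomputable def Jmat (c : ℕ) (f : Fin c → MvPolynomial (Fin d) ℂ)
    (z y : Fin d → ℂ) : Matrix (Fin (c+1)) (Fin d) ℂ :=
  Matrix.of fun i j =>
    Fin.lastCases (y j) (fun i' => z j * MvPolynomial.eval z (MvPolynomial.pderiv j (f i'))) i

/-- The binary stationary-point relation: `rank J(z,y) ≤ c`. -/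
noncomputable def StationaryRel (c : ℕ) (f : Fin c → MvPolynomial (Fin d) ℂ)
    (z y : Fin d → ℂ) : Prop := (Jmat d c f z y).rank ≤ c

/-- The complex tangent space at `z` of a set cut out by the polynomials `f i`
(kernel of the differentials). -/
def TangentSp (c : ℕ) (f : Fin c → MvPolynomial (Fin d) ℂ) (z : Fin d → ℂ) :
    Set (Fin d → ℂ) :=
  {v | ∀ i, ∑ j, v j * MvPolynomial.eval z (MvPolynomial.pderiv j (f i)) = 0}


variable {d}

/-- A compact toric complex-manifold compactification `K` of the torus `ℂ_*^d`,
containing `ℂ_*^d` as an open dense stratum (an orbit of the extended torus action),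
to which the monomial function `H(z) = z^m` extends as a smooth `ℙ¹`-valued function.
`ℙ¹` is modeled as the one-point compactification `OnePoint ℂ` of `ℂ`, and smoothness of
the extension means that near each point it is given either by a holomorphic function or
by the reciprocal of one. -/
structure SmoothCompactToricExtension (d : ℕ) (m : Fin d → ℤ) where
  K : Type
  [tK : TopologicalSpace K]
  [cK : ChartedSpace (EuclideanSpace ℂ (Fin d)) K]
  [sm : IsManifold (𝓘(ℂ, EuclideanSpace ℂ (Fin d))) (⊤ : ℕ∞) K]
  compact : CompactSpace K
  t2 : T2Space K
  /-- the embedding of the torus `ℂ_*^d` -/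
  emb : {z : Fin d → ℂ // z ∈ Cstar d} → K
  emb_open : IsOpenEmbedding emb
  emb_dense : Dense (Set.range emb)
  /-- the torus action on `K`, extending multiplication on `ℂ_*^d` -/
  act : {z : Fin d → ℂ // z ∈ Cstar d} → K → K
  act_cont : ∀ t, Continuous (act t)
  act_extends : ∀ t z : {z : Fin d → ℂ // z ∈ Cstar d},
    act t (emb z) = emb ⟨fun j => t.1 j * z.1 j,
      fun j => mul_ne_zero (t.2 j) (z.2 j)⟩
  /-- the extension of the monomial `z^m` -/
  H : K → OnePoint ℂ
  H_cont : Continuous H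
  H_extends : ∀ z : {z : Fin d → ℂ // z ∈ Cstar d},
    H (emb z) = ((∏ j, z.1 j ^ (m j) : ℂ) : OnePoint ℂ)
  H_smooth : ∀ x : K, ∃ U ∈ nhds x,
    (∃ f : K → ℂ,
      MDifferentiableOn (𝓘(ℂ, EuclideanSpace ℂ (Fin d))) (𝓘(ℂ, ℂ)) f U ∧
      ∀ y ∈ U, H y = (f y : OnePoint ℂ)) ∨
    (∃ f : K → ℂ,
      MDifferentiableOn (𝓘(ℂ, EuclideanSpace ℂ (Fin d))) (𝓘(ℂ, ℂ)) f U ∧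
      ∀ y ∈ U, H y = (if f y = 0 then OnePoint.infty else ((f y)⁻¹ : ℂ)))

end ACSV


set_option linter.dupNamespace false

open Filter Topology Set OnePoint in
section
noncomputable section
namespace ACSVP

abbrev P1 := OnePoint ℂ

/-- eventually large norm in the cocompact filter -/
lemma ev_norm (r : ℝ) : ∀ᶠ w : ℂ in cocompact ℂ, r < ‖w‖ := by
  have h := tendsto_norm_cocompact_atTop (E := ℂ)
  exact h.eventually (eventually_gt_atTop r)

lemma tendsto_nhds_infty_of_norm {α : Type*} {g : α → P1} {l : Filter α}
    (h : ∀ R : ℝ, ∀ᶠ a in l, ∀ w : ℂ, g a = (w : P1) → R < ‖w‖) :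
    Tendsto g l (𝓝 (∞ : P1)) := by
  rw [OnePoint.hasBasis_nhds_infty.tendsto_right_iff]
  rintro s ⟨hsc, hsk⟩
  obtain ⟨R, hR⟩ := hsk.isBounded.subset_closedBall 0
  filter_upwards [h R] with a ha
  match hga : g a with
  | OnePoint.infty => exact Or.inr rfl
  | (w : ℂ) =>
    refine Or.inl ⟨w, fun hw => ?_, rfl⟩
    have := hR hw
    simp only [Metric.mem_closedBall, dist_zero_right] at this
    exact absurd this (not_le.mpr (ha w hga))

lemma tendsto_inv_cocompact : Tendsto (fun w : ℂ => w⁻¹) (cocompact ℂ) (𝓝 0) := by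
  rw [Metric.tendsto_nhds]
  intro ε hε
  filter_upwards [ev_norm (ε⁻¹)] with w hw
  rw [dist_zero_right, norm_inv]
  have h1 : (0:ℝ) < ‖w‖ := lt_of_le_of_lt (by positivity) hw
  exact inv_lt_of_inv_lt₀ hε hw

/-- inversion on the Riemann sphere -/
def oinv : P1 → P1 := fun x => x.elim ((0:ℂ) : P1) (fun w => if w = 0 then ∞ else ((w⁻¹ : ℂ) : P1))

@[simp] lemma oinv_infty : oinv ∞ = ((0:ℂ) : P1) := rfl
@[simp] lemma oinv_coe (w : ℂ) : oinv (w : P1) = if w = 0 then ∞ else ((w⁻¹ : ℂ) : P1) := rfl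

lemma oinv_coe_ne (w : ℂ) (hw : w ≠ 0) : oinv (w : P1) = ((w⁻¹ : ℂ) : P1) := by
  simp [hw]

lemma oinv_invol : ∀ x, oinv (oinv x) = x := by
  intro x
  match x with
  | OnePoint.infty => simp [oinv]
  | (w : ℂ) =>
    by_cases hw : w = 0
    · simp [hw, oinv]
    · simp [oinv, hw, inv_eq_zero]

lemma oinv_eq_infty_iff (x : P1) : oinv x = ∞ ↔ x = ((0:ℂ) : P1) := by
  match x with
  | OnePoint.infty => simp [OnePoint.coe_ne_infty, (OnePoint.infty_ne_coe _).symm, OnePoint.infty_ne_coe]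
  | (w : ℂ) =>
    by_cases hw : w = 0 <;> simp [hw, OnePoint.coe_ne_infty, OnePoint.coe_eq_coe]

lemma continuous_oinv : Continuous oinv := by
  rw [OnePoint.continuous_iff]
  constructor
  · -- at infinity: tendsto to coe 0
    rw [Filter.coclosedCompact_eq_cocompact]
    have : Tendsto (fun w : ℂ => w⁻¹) (cocompact ℂ) (𝓝 0) := tendsto_inv_cocompact
    have hc : Tendsto (fun v : ℂ => (v : P1)) (𝓝 0) (𝓝 ((0:ℂ) : P1)) :=
      (OnePoint.isOpenEmbedding_coe.continuous).continuousAt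
    have h2 : Tendsto (fun w : ℂ => ((w⁻¹ : ℂ) : P1)) (cocompact ℂ) (𝓝 ((0:ℂ):P1)) :=
      hc.comp this
    apply h2.congr'
    filter_upwards [ev_norm 0] with w hw
    have : w ≠ 0 := by intro h; rw [h] at hw; simp at hw
    simp [this]
  · -- on ℂ
    rw [continuous_iff_continuousAt]
    intro w0
    by_cases hw0 : w0 = 0
    · subst hw0
      -- tendsto to ∞
      have : (fun w : ℂ => oinv w) = fun w => if w = 0 then ∞ else ((w⁻¹:ℂ) : P1) := rfl
      rw [ContinuousAt]
      simp only [oinv_coe, if_pos rfl]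
      apply tendsto_nhds_infty_of_norm
      intro R
      have : ∀ᶠ w : ℂ in 𝓝 0, ‖w‖ < (max R 1)⁻¹ := by
        apply Metric.eventually_nhds_iff.mpr
        refine ⟨(max R 1)⁻¹, by positivity, fun {w} hw => ?_⟩
        simpa [dist_zero_right] using hw
      filter_upwards [this] with w hw
      intro v hv
      by_cases hw0 : w = 0
      · simp [hw0] at hv
      · simp only [oinv_coe, if_neg hw0] at hv
        have hv' : v = w⁻¹ := (OnePoint.coe_eq_coe.mp hv).symm
        subst hv'
        rw [norm_inv]
        have h1 : 0 < ‖w‖ := norm_pos_iff.mpr hw0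
        calc R ≤ max R 1 := le_max_left _ _
        _ < ‖w‖⁻¹ := by
              rw [lt_inv_comm₀ (by positivity) h1]
              exact hw
    · have hev : ∀ᶠ w : ℂ in 𝓝 w0, oinv (w : P1) = ((w⁻¹ : ℂ) : P1) := by
        filter_upwards [eventually_ne_nhds hw0] with w hw
        simp [hw]
      have hca : ContinuousAt (fun w : ℂ => ((w⁻¹ : ℂ) : P1)) w0 :=
        (OnePoint.isOpenEmbedding_coe.continuous.continuousAt).comp (continuousAt_inv₀ hw0)
      exact hca.congr (Filter.EventuallyEq.symm hev)

/-! ### powers and scaling on P1 -/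

def opowN (n : ℕ) : P1 → P1 := OnePoint.map (fun w : ℂ => w ^ n)

@[simp] lemma opowN_infty (n : ℕ) : opowN n ∞ = ∞ := rfl
@[simp] lemma opowN_coe (n : ℕ) (w : ℂ) : opowN n (w : P1) = ((w^n : ℂ) : P1) := rfl

lemma continuous_opowN {n : ℕ} (hn : n ≠ 0) : Continuous (opowN n) := by
  apply OnePoint.continuous_map (continuous_pow n)
  rw [Filter.coclosedCompact_eq_cocompact]
  apply tendsto_cocompact_of_tendsto_dist_comp_atTop (0:ℂ)
  simp only [dist_zero_right, norm_pow]
  exact (tendsto_pow_atTop hn).comp tendsto_norm_cocompact_atTop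

def opow (c : ℤ) : P1 → P1 :=
  if 0 < c then opowN c.natAbs
  else if c < 0 then oinv ∘ opowN c.natAbs
  else fun _ => ((1:ℂ) : P1)

lemma continuous_opow (c : ℤ) : Continuous (opow c) := by
  unfold opow
  split_ifs with h1 h2
  · exact continuous_opowN (Int.natAbs_ne_zero.mpr (by omega))
  · exact continuous_oinv.comp (continuous_opowN (Int.natAbs_ne_zero.mpr (by omega)))
  · exact continuous_const

lemma opow_coe_ne (c : ℤ) {w : ℂ} (hw : w ≠ 0) : opow c (w : P1) = ((w ^ c : ℂ) : P1) := by
  unfold opow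
  rcases lt_trichotomy 0 c with h|h|h
  · rw [if_pos h]
    simp only [opowN_coe]
    norm_cast
    rw [← zpow_natCast]
    congr 1
    omega
  · rw [if_neg (by omega), if_neg (by omega), ← h, zpow_zero]
  · rw [if_neg (by omega), if_pos h, Function.comp_apply, opowN_coe,
      oinv_coe_ne _ (pow_ne_zero _ hw)]
    norm_cast
    rw [← zpow_natCast, ← zpow_neg]
    congr 1
    omega

def oscal (c : ℂ) : P1 → P1 := OnePoint.map (fun w => c * w)

@[simp] lemma oscal_infty (c : ℂ) : oscal c ∞ = ∞ := rfl
@[simp] lemma oscal_coe (c w : ℂ) : oscal c (w : P1) = ((c * w : ℂ) : P1) := rfl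

lemma continuous_oscal {c : ℂ} (hc : c ≠ 0) : Continuous (oscal c) := by
  apply OnePoint.continuous_map (continuous_const.mul continuous_id)
  rw [Filter.coclosedCompact_eq_cocompact]
  apply tendsto_cocompact_of_tendsto_dist_comp_atTop (0:ℂ)
  simp only [dist_zero_right, Pi.mul_apply, norm_mul, id]
  exact (tendsto_norm_cocompact_atTop (E := ℂ)).const_mul_atTop (norm_pos_iff.mpr hc)

/-! ### integer monomials -/

section Pw
def pw {d : ℕ} (E : Fin d → ℤ) (z : Fin d → ℂ) : ℂ := ∏ j, z j ^ E j

variable {d : ℕ}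

lemma pw_ne_zero {E : Fin d → ℤ} {z} (hz : ∀ j, z j ≠ 0) : pw E z ≠ 0 :=
  Finset.prod_ne_zero_iff.mpr fun j _ => zpow_ne_zero _ (hz j)

lemma pw_zero (z : Fin d → ℂ) : pw (0 : Fin d → ℤ) z = 1 := by simp [pw]

lemma pw_add {E F : Fin d → ℤ} {z} (hz : ∀ j, z j ≠ 0) : pw (E + F) z = pw E z * pw F z := by
  rw [pw, pw, pw, ← Finset.prod_mul_distrib]
  exact Finset.prod_congr rfl fun j _ => by rw [Pi.add_apply, zpow_add₀ (hz j)]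

lemma pw_smul (c : ℤ) (E : Fin d → ℤ) (z : Fin d → ℂ) : pw (c • E) z = (pw E z) ^ c := by
  rw [pw, pw, ← Finset.prod_zpow]
  exact Finset.prod_congr rfl fun j _ => by
    rw [Pi.smul_apply, smul_eq_mul, mul_comm, zpow_mul]

lemma pw_sum {ι : Type*} (s : Finset ι) (E : ι → Fin d → ℤ) (z : Fin d → ℂ)
    (hz : ∀ j, z j ≠ 0) :
    pw (∑ i ∈ s, E i) z = ∏ i ∈ s, pw (E i) z := by
  classical
  induction s using Finset.induction_on with
  | empty => simp [pw_zero]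
  | insert _ _ h ih => rw [Finset.sum_insert h, Finset.prod_insert h, pw_add hz, ih]

lemma pw_mulz {E : Fin d → ℤ} (t z : Fin d → ℂ) :
    pw E (fun j => t j * z j) = pw E t * pw E z := by
  rw [pw, pw, pw, ← Finset.prod_mul_distrib]
  exact Finset.prod_congr rfl fun j _ => mul_zpow _ _ _

lemma pw_one_row (k : Fin d) (z : Fin d → ℂ) :
    pw (fun j => (1 : Matrix (Fin d) (Fin d) ℤ) k j) z = z k := by
  rw [pw, Finset.prod_eq_single k]
  · rw [Matrix.one_apply_eq, zpow_one]
  · intro b _ hb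
    rw [Matrix.one_apply_ne (Ne.symm hb), zpow_zero]
  · intro h; exact absurd (Finset.mem_univ k) h

end Pw
/-! ### The compact manifold `(ℙ¹)^d` -/

open scoped Manifold

abbrev Kt (d : ℕ) : Type := Fin d → P1

section Mfld

variable (d : ℕ)

def Phi : (Fin d → ℂ) → Kt d := fun z j => (z j : P1)

lemma isOpenEmbedding_Phi : IsOpenEmbedding (Phi d) := by
  refine IsOpenEmbedding.of_continuous_injective_isOpenMap ?_ ?_ ?_
  · exact continuous_pi fun j => OnePoint.isOpenEmbedding_coe.continuous.comp (continuous_apply j)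
  · intro a b h
    funext j
    exact OnePoint.coe_injective (congrFun h j)
  · have h : Phi d = Pi.map (fun (j : Fin d) (w : ℂ) => (w : P1)) := rfl
    rw [h]
    exact IsOpenMap.piMap (fun i => OnePoint.isOpenEmbedding_coe.isOpenMap)
      (Filter.eventually_cofinite.mpr (Set.toFinite _))

lemma range_Phi : Set.range (Phi d) = {x : Kt d | ∀ j, x j ≠ ∞} := by
  ext x
  constructor
  · rintro ⟨z, rfl⟩ j
    exact OnePoint.coe_ne_infty _
  · intro hx
    have : ∀ j, ∃ w : ℂ, (w : P1) = x j := by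
      intro j
      match hj : x j with
      | OnePoint.infty => exact absurd hj (hx j)
      | (w : ℂ) => exact ⟨w, rfl⟩
    choose z hz using this
    exact ⟨z, funext hz⟩

def psi (σ : Fin d → Bool) : Kt d → Kt d := fun x j => if σ j then oinv (x j) else x j

lemma continuous_psi (σ : Fin d → Bool) : Continuous (psi d σ) := by
  refine continuous_pi fun j => ?_
  by_cases h : σ j = true
  · simp only [psi, h, if_true]
    exact continuous_oinv.comp (continuous_apply j)
  · simp only [psi, if_neg h]
    exact continuous_apply j

lemma psi_invol (σ : Fin d → Bool) (x : Kt d) : psi d σ (psi d σ x) = x := by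
  funext j
  by_cases h : σ j = true
  · simp only [psi, h, if_true]
    exact oinv_invol _
  · simp only [psi, if_neg h]

/-- The model-space identification. -/
def eqE : EuclideanSpace ℂ (Fin d) ≃L[ℂ] (Fin d → ℂ) := EuclideanSpace.equiv (Fin d) ℂ

/-- source of the chart indexed by `σ`. -/
def Usrc (σ : Fin d → Bool) : Set (Kt d) :=
  {x | ∀ j, if σ j then x j ≠ ((0:ℂ) : P1) else x j ≠ ∞}

lemma isOpen_Usrc (σ : Fin d → Bool) : IsOpen (Usrc d σ) := by
  have h : Usrc d σ = ⋂ j, (fun x : Kt d => x j) ⁻¹'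
      (if σ j then {((0:ℂ):P1)}ᶜ else {(∞ : P1)}ᶜ) := by
    ext x
    simp only [Usrc, Set.mem_setOf_eq, Set.mem_iInter, Set.mem_preimage]
    refine forall_congr' fun j => ?_
    by_cases h : σ j = true
    · simp only [h, if_true, Set.mem_compl_iff, Set.mem_singleton_iff]
    · simp only [if_neg h, Set.mem_compl_iff, Set.mem_singleton_iff]
  rw [h]
  refine isOpen_iInter_of_finite fun j => ?_
  by_cases h : σ j = true
  · simp only [h, if_true]
    exact (continuous_apply j).isOpen_preimage _ isOpen_compl_singleton
  · simp only [if_neg h]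
    exact (continuous_apply j).isOpen_preimage _ isOpen_compl_singleton

/-- partial inverse of `Phi` -/
abbrev PhiP := (isOpenEmbedding_Phi d).toOpenPartialHomeomorph (Phi d)

lemma psi_mem_range_Phi {σ : Fin d → Bool} {x : Kt d} (hx : x ∈ Usrc d σ) :
    psi d σ x ∈ Set.range (Phi d) := by
  rw [range_Phi]
  intro j
  have hj := hx j
  by_cases h : σ j = true
  · simp only [psi, h, if_true]
    simp only [h, if_true] at hj
    rw [Ne, oinv_eq_infty_iff]
    exact hj
  · simp only [psi, if_neg h]
    simpa only [if_neg h] using hj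

lemma psi_Phi_mem_Usrc (σ : Fin d → Bool) (v : Fin d → ℂ) :
    psi d σ (Phi d v) ∈ Usrc d σ := by
  intro j
  by_cases h : σ j = true
  · simp only [psi, Phi, h, if_true]
    by_cases hv : v j = 0
    · rw [hv, oinv_coe, if_pos rfl]
      exact (OnePoint.infty_ne_coe _)
    · rw [oinv_coe_ne _ hv]
      simp only [Ne, OnePoint.coe_eq_coe]
      exact inv_ne_zero hv
  · simp only [psi, Phi, if_neg h, h]
    exact OnePoint.coe_ne_infty _

/-- The chart indexed by `σ`. -/
def chart (σ : Fin d → Bool) : OpenPartialHomeomorph (Kt d) (EuclideanSpace ℂ (Fin d)) where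
  toFun x := (eqE d).symm ((PhiP d).symm (psi d σ x))
  invFun u := psi d σ (Phi d (eqE d u))
  source := Usrc d σ
  target := Set.univ
  map_source' _ _ := Set.mem_univ _
  map_target' u _ := psi_Phi_mem_Usrc d σ (eqE d u)
  left_inv' := by
    intro x hx
    show psi d σ (Phi d ((eqE d) ((eqE d).symm ((PhiP d).symm (psi d σ x))))) = x
    rw [ContinuousLinearEquiv.apply_symm_apply,
      (isOpenEmbedding_Phi d).toOpenPartialHomeomorph_right_inv (Phi d) (psi_mem_range_Phi d hx),
      psi_invol]
  right_inv' := by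
    intro u _
    show (eqE d).symm ((PhiP d).symm (psi d σ (psi d σ (Phi d (eqE d u))))) = u
    rw [psi_invol, (isOpenEmbedding_Phi d).toOpenPartialHomeomorph_left_inv (Phi d)]
    exact (eqE d).symm_apply_apply u
  open_source := isOpen_Usrc d σ
  open_target := isOpen_univ
  continuousOn_toFun := by
    refine (eqE d).symm.continuous.comp_continuousOn ?_
    refine ContinuousOn.comp (PhiP d).symm.continuousOn (continuous_psi d σ).continuousOn ?_
    intro x hx
    rw [OpenPartialHomeomorph.symm_source, (isOpenEmbedding_Phi d).toOpenPartialHomeomorph_target]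
    exact psi_mem_range_Phi d hx
  continuousOn_invFun := by
    refine Continuous.continuousOn ?_
    exact (continuous_psi d σ).comp
      ((continuous_pi fun j => OnePoint.isOpenEmbedding_coe.continuous.comp (continuous_apply j)).comp
        (eqE d).continuous)

lemma chart_apply (σ : Fin d → Bool) (x : Kt d) :
    chart d σ x = (eqE d).symm ((PhiP d).symm (psi d σ x)) := rfl

lemma chart_symm_apply (σ : Fin d → Bool) (u : EuclideanSpace ℂ (Fin d)) :
    (chart d σ).symm u = psi d σ (Phi d (eqE d u)) := rfl

@[simp] lemma chart_source (σ : Fin d → Bool) : (chart d σ).source = Usrc d σ := rfl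
@[simp] lemma chart_target (σ : Fin d → Bool) : (chart d σ).target = Set.univ := rfl

def stdsig (x : Kt d) : Fin d → Bool := fun j => (x j).elim true (fun _ => false)

lemma stdsig_spec (x : Kt d) (j : Fin d) : stdsig d x j = true ↔ x j = ∞ := by
  unfold stdsig
  match hj : x j with
  | OnePoint.infty => simp
  | (w : ℂ) => simp [OnePoint.coe_ne_infty w]

instance instChartedKt : ChartedSpace (EuclideanSpace ℂ (Fin d)) (Kt d) where
  atlas := Set.range (chart d)
  chartAt x := chart d (stdsig d x)
  mem_chart_source x := by
    rw [chart_source]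
    intro j
    by_cases h : stdsig d x j = true
    · rw [if_pos h, (stdsig_spec d x j).mp h]
      exact (OnePoint.infty_ne_coe _)
    · rw [if_neg h]
      intro hcontra
      exact h ((stdsig_spec d x j).mpr hcontra)
  chart_mem_atlas x := ⟨_, rfl⟩

/-! ### Smooth structure -/

def trmap (σ τ : Fin d → Bool) : (Fin d → ℂ) → (Fin d → ℂ) :=
  fun v j => if σ j = τ j then v j else (v j)⁻¹

lemma psi_psi_Phi {σ τ : Fin d → Bool} {v : Fin d → ℂ}
    (hv : ∀ j, σ j ≠ τ j → v j ≠ 0) :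
    psi d τ (psi d σ (Phi d v)) = Phi d (trmap d σ τ v) := by
  funext j
  simp only [psi, Phi, trmap]
  by_cases hσ : σ j = true <;> by_cases hτ : τ j = true
  · rw [if_pos hτ, if_pos hσ, oinv_invol, if_pos (hσ.trans hτ.symm)]
  · have hne : σ j ≠ τ j := fun h => hτ (h ▸ hσ)
    have hv0 := hv j hne
    rw [if_neg hτ, if_pos hσ, oinv_coe_ne _ hv0, if_neg hne]
  · have hne : σ j ≠ τ j := fun h => hσ (h.symm ▸ hτ)
    have hv0 := hv j hne
    rw [if_pos hτ, if_neg hσ, oinv_coe_ne _ hv0, if_neg hne]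
  · have heq : σ j = τ j := by
      revert hσ hτ; cases σ j <;> cases τ j <;> simp
    rw [if_neg hτ, if_neg hσ, if_pos heq]

lemma trans_source_subset (σ τ : Fin d → Bool) :
    ((chart d σ).symm ≫ₕ chart d τ).source ⊆
      {u : EuclideanSpace ℂ (Fin d) | ∀ j, σ j ≠ τ j → eqE d u j ≠ 0} := by
  intro u hu j hστ
  rw [OpenPartialHomeomorph.trans_source] at hu
  obtain ⟨-, hu2⟩ := hu
  rw [Set.mem_preimage, chart_source] at hu2
  have hj := hu2 j
  rw [chart_symm_apply] at hj
  by_cases hσ : σ j = true <;> by_cases hτ : τ j = true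
  · exact absurd (hσ.trans hτ.symm) hστ
  · -- σ true τ false : coordinate is oinv (coe v j), condition ≠ ∞
    rw [if_neg hτ] at hj
    simp only [psi, Phi, if_pos hσ] at hj
    intro h0
    exact hj ((oinv_eq_infty_iff _).mpr (by rw [h0]))
  · -- σ false τ true : coordinate is coe v j, condition ≠ coe 0
    rw [if_pos hτ] at hj
    simp only [psi, Phi, if_neg hσ] at hj
    intro h0
    exact hj (by rw [h0])
  · exact absurd (by revert hσ hτ; cases σ j <;> cases τ j <;> simp) hστ

lemma contDiffOn_trans (σ τ : Fin d → Bool) :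
    ContDiffOn ℂ (⊤ : ℕ∞) ((chart d σ).symm ≫ₕ chart d τ)
      ((chart d σ).symm ≫ₕ chart d τ).source := by
  have hsub := trans_source_subset d σ τ
  have hnice : ContDiffOn ℂ (⊤ : ℕ∞) (fun u => (eqE d).symm (trmap d σ τ (eqE d u)))
      {u : EuclideanSpace ℂ (Fin d) | ∀ j, σ j ≠ τ j → eqE d u j ≠ 0} := by
    refine ContDiff.comp_contDiffOn ((eqE d).symm.contDiff) ?_
    rw [contDiffOn_pi]
    intro j
    by_cases h : σ j = τ j
    · simp only [trmap, if_pos h]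
      have he : (fun u : EuclideanSpace ℂ (Fin d) => eqE d u j)
          = fun u => ((ContinuousLinearMap.proj j).comp (eqE d).toContinuousLinearMap) u := rfl
      rw [he]
      exact (ContinuousLinearMap.contDiff _).contDiffOn
    · simp only [trmap, if_neg h]
      intro u hu
      have h0 : eqE d u j ≠ 0 := hu j h
      refine ContDiffAt.contDiffWithinAt ?_
      have h1 : ContDiffAt ℂ (⊤ : ℕ∞) (fun w : ℂ => w⁻¹) (eqE d u j) := contDiffAt_inv ℂ h0
      have h2 : ContDiffAt ℂ (⊤ : ℕ∞) (fun u : EuclideanSpace ℂ (Fin d) => eqE d u j) u :=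
        (ContinuousLinearMap.contDiff
          ((ContinuousLinearMap.proj j).comp (eqE d).toContinuousLinearMap)).contDiffAt
      exact h1.comp u h2
  refine (hnice.mono hsub).congr ?_
  intro u hu
  have hv : ∀ j, σ j ≠ τ j → eqE d u j ≠ 0 := hsub hu
  show (eqE d).symm ((PhiP d).symm (psi d τ (psi d σ (Phi d (eqE d u)))))
      = (eqE d).symm (trmap d σ τ (eqE d u))
  rw [psi_psi_Phi d hv, (isOpenEmbedding_Phi d).toOpenPartialHomeomorph_left_inv (Phi d)]

instance instSmoothKt :
    IsManifold (𝓘(ℂ, EuclideanSpace ℂ (Fin d))) (⊤ : ℕ∞) (Kt d) := by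
  apply isManifold_of_contDiffOn
  rintro e e' ⟨σ, rfl⟩ ⟨τ, rfl⟩
  simp only [modelWithCornersSelf_coe, modelWithCornersSelf_coe_symm, Function.comp_id,
    Function.id_comp, Set.range_id, Set.inter_univ, Set.preimage_id, CompTriple.comp_eq]
  exact contDiffOn_trans d σ τ


end Mfld

/-! ### Smith normal form: a monomial exponent is an integer multiple of a basis vector -/

section Algebra

variable {d : ℕ}

lemma exists_basis_row {m : Fin d → ℤ} (hm : m ≠ 0) :
    ∃ (b : Module.Basis (Fin d) ℤ (Fin d → ℤ)) (i0 : Fin d) (c : ℤ), m = c • (b i0 : Fin d → ℤ) := by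
  classical
  obtain ⟨n, bM, bN, f, a, hsnf⟩ :=
    Submodule.smithNormalForm (Pi.basisFun ℤ (Fin d)) (Submodule.span ℤ {m})
  have e1 : ℤ ≃ₗ[ℤ] (Submodule.span ℤ ({m} : Set (Fin d → ℤ))) :=
    LinearEquiv.toSpanNonzeroSingleton ℤ _ m hm
  let bsing : Module.Basis (Fin 1) ℤ (Submodule.span ℤ ({m} : Set (Fin d → ℤ))) :=
    (Module.Basis.singleton (Fin 1) ℤ).map e1
  have hn : n = 1 := Fin.equiv_iff_eq.mp ⟨bN.indexEquiv bsing⟩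
  subst hn
  have hmem : m ∈ Submodule.span ℤ ({m} : Set (Fin d → ℤ)) :=
    Submodule.mem_span_singleton_self m
  set mN : (Submodule.span ℤ ({m} : Set (Fin d → ℤ))) := ⟨m, hmem⟩ with hmN
  have hrepr : (bN.repr mN 0) • bN 0 = mN := by
    have h := bN.sum_repr mN
    rwa [Fin.sum_univ_one] at h
  refine ⟨bM, f 0, bN.repr mN 0 * a 0, ?_⟩
  have hcoe := congrArg (Subtype.val) hrepr
  simp only [Submodule.coe_smul_of_tower] at hcoe
  calc m = (bN.repr mN 0) • ((bN 0 : Fin d → ℤ)) := hcoe.symm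
    _ = (bN.repr mN 0) • (a 0 • bM (f 0)) := by rw [hsnf 0]
    _ = (bN.repr mN 0 * a 0) • bM (f 0) := (mul_smul _ _ _).symm

lemma exists_inverse (b : Module.Basis (Fin d) ℤ (Fin d → ℤ)) :
    ∃ A : Matrix (Fin d) (Fin d) ℤ,
      (∀ k j, ∑ i, A k i * b i j = (1 : Matrix (Fin d) (Fin d) ℤ) k j) ∧
      (∀ k j, ∑ i, b k i * A i j = (1 : Matrix (Fin d) (Fin d) ℤ) k j) := by
  classical
  set P := (Pi.basisFun ℤ (Fin d)).toMatrix ⇑b with hP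
  set Q := b.toMatrix ⇑(Pi.basisFun ℤ (Fin d)) with hQ
  have hPQ : P * Q = 1 := Module.Basis.toMatrix_mul_toMatrix_flip _ _
  have hQP : Q * P = 1 := Module.Basis.toMatrix_mul_toMatrix_flip _ _
  have hPapp : ∀ x y, P x y = b y x := by
    intro x y
    simp [hP, Module.Basis.toMatrix_apply, Pi.basisFun_repr]
  have hone : ∀ (k j : Fin d), (1 : Matrix (Fin d) (Fin d) ℤ) j k = (1 : Matrix (Fin d) (Fin d) ℤ) k j := by
    intro k j
    by_cases h : k = j
    · rw [h]
    · rw [Matrix.one_apply_ne h, Matrix.one_apply_ne (Ne.symm h)]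
  refine ⟨Q.transpose, ?_, ?_⟩
  · intro k j
    have : ∑ i, Q.transpose k i * b i j = (P * Q) j k := by
      rw [Matrix.mul_apply]
      refine Finset.sum_congr rfl fun i _ => ?_
      rw [Matrix.transpose_apply, hPapp j i, mul_comm]
    rw [this, hPQ, hone]
  · intro k j
    have : ∑ i, b k i * Q.transpose i j = (Q * P) j k := by
      rw [Matrix.mul_apply]
      refine Finset.sum_congr rfl fun i _ => ?_
      rw [Matrix.transpose_apply, hPapp i k, mul_comm]
    rw [this, hQP, hone]

end Algebra

/-! ### The torus embedding -/

section Emb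

variable {d : ℕ}

lemma isOpen_Cstar : IsOpen (ACSV.Cstar d) := by
  have h : ACSV.Cstar d = ⋂ j, (fun z : Fin d → ℂ => z j) ⁻¹' {(0:ℂ)}ᶜ := by
    ext z; simp [ACSV.Cstar]
  rw [h]
  exact isOpen_iInter_of_finite fun j =>
    (continuous_apply j).isOpen_preimage _ isOpen_compl_singleton

abbrev Tor (d : ℕ) := {z : Fin d → ℂ // z ∈ ACSV.Cstar d}

lemma tor_ne (z : Tor d) : ∀ j, z.1 j ≠ 0 := z.2

lemma continuous_pw_tor (E : Fin d → ℤ) : Continuous (fun z : Tor d => pw E z.1) := by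
  unfold pw
  apply continuous_finset_prod
  intro j _
  rw [continuous_iff_continuousAt]
  intro z
  have h1 : ContinuousAt (fun w : ℂ => w ^ E j) (z.1 j) :=
    continuousAt_zpow₀ _ _ (Or.inl (tor_ne z j))
  have h2 : ContinuousAt (fun z : Tor d => z.1 j) z :=
    ((continuous_apply j).comp continuous_subtype_val).continuousAt
  exact ContinuousAt.comp (x := z) h1 h2

variable (b : Module.Basis (Fin d) ℤ (Fin d → ℤ))

def embB : Tor d → Kt d := fun z => Phi d (fun i => pw (fun j => b i j) z.1)

lemma embB_apply (z : Tor d) (i : Fin d) :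
    embB b z i = ((pw (fun j => b i j) z.1 : ℂ) : P1) := rfl

lemma embB_open_dense : IsOpenEmbedding (embB b) ∧ Dense (Set.range (embB b)) := by
  classical
  obtain ⟨A, hAB, hBA⟩ := exists_inverse b
  set F : Tor d → Tor d :=
    fun z => ⟨fun i => pw (fun j => b i j) z.1, fun i => pw_ne_zero (tor_ne z)⟩ with hF
  set G : Tor d → Tor d :=
    fun x => ⟨fun k => pw (fun i => A k i) x.1, fun k => pw_ne_zero (tor_ne x)⟩ with hG
  have key : ∀ (M N : Matrix (Fin d) (Fin d) ℤ)
      (hMN : ∀ k j, ∑ i, M k i * N i j = (1 : Matrix (Fin d) (Fin d) ℤ) k j)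
      (z : Fin d → ℂ) (hz : ∀ j, z j ≠ 0) (k : Fin d),
      pw (fun i => M k i) (fun i => pw (fun j => N i j) z) = z k := by
    intro M N hMN z hz k
    have h1 : pw (fun i => M k i) (fun i => pw (fun j => N i j) z)
        = ∏ i, (pw (fun j => N i j) z) ^ (M k i) := rfl
    have h2 : ∀ i ∈ Finset.univ, (pw (fun j => N i j) z) ^ (M k i)
        = pw ((M k i) • fun j => N i j) z := fun i _ => (pw_smul _ _ _).symm
    rw [h1, Finset.prod_congr rfl h2, ← pw_sum _ _ _ hz]
    have h3 : (∑ i, (M k i) • fun j => N i j) = fun j => (1 : Matrix (Fin d) (Fin d) ℤ) k j := by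
      funext j
      rw [Finset.sum_apply]
      simp only [Pi.smul_apply, smul_eq_mul]
      exact hMN k j
    rw [h3]
    exact pw_one_row k z
  have hGF : ∀ z, G (F z) = z := by
    intro z
    apply Subtype.ext
    funext k
    exact key A (fun i j => b i j) hAB z.1 (tor_ne z) k
  have hFG : ∀ x, F (G x) = x := by
    intro x
    apply Subtype.ext
    funext k
    exact key (fun i j => b i j) A hBA x.1 (tor_ne x) k
  have hFcont : Continuous F :=
    Continuous.subtype_mk (continuous_pi fun i => continuous_pw_tor _) _
  have hGcont : Continuous G :=
    Continuous.subtype_mk (continuous_pi fun k => continuous_pw_tor _) _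
  let Fh : Tor d ≃ₜ Tor d := ⟨⟨F, G, hGF, hFG⟩, hFcont, hGcont⟩
  have hval : IsOpenEmbedding (Subtype.val : Tor d → (Fin d → ℂ)) :=
    isOpen_Cstar.isOpenEmbedding_subtypeVal
  have hPhi := isOpenEmbedding_Phi d
  have hcomp : embB b = (Phi d) ∘ (Subtype.val : Tor d → (Fin d → ℂ)) ∘ F := rfl
  constructor
  · rw [hcomp]
    exact hPhi.comp (hval.comp Fh.isOpenEmbedding)
  · have hrange : Set.range (embB b) = Phi d '' (ACSV.Cstar d) := by
      have hrF : Set.range F = Set.univ := Set.range_eq_univ.mpr fun z => ⟨G z, hFG z⟩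
      rw [hcomp, Set.range_comp, Set.range_comp, hrF, Set.image_univ, Subtype.range_coe]
    rw [hrange]
    have hD : Dense {y : P1 | y ≠ ∞ ∧ y ≠ ((0:ℂ):P1)} := by
      have h1 : Dense ({(∞:P1)}ᶜ) := by
        rw [OnePoint.compl_infty]
        exact OnePoint.denseRange_coe
      have h2 : Dense ({((0:ℂ):P1)}ᶜ) := dense_compl_singleton _
      have heq : {y : P1 | y ≠ ∞ ∧ y ≠ ((0:ℂ):P1)} = {(∞:P1)}ᶜ ∩ {((0:ℂ):P1)}ᶜ := by
        ext y
        simp only [Set.mem_setOf_eq, Set.mem_inter_iff, Set.mem_compl_iff,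
          Set.mem_singleton_iff]
      rw [heq]
      exact h1.inter_of_isOpen_left h2 isOpen_compl_singleton
    have heq2 : Phi d '' (ACSV.Cstar d)
        = Set.pi Set.univ (fun _ : Fin d => {y : P1 | y ≠ ∞ ∧ y ≠ ((0:ℂ):P1)}) := by
      ext x
      constructor
      · rintro ⟨z, hz, rfl⟩ j _
        refine ⟨OnePoint.coe_ne_infty _, ?_⟩
        simp only [Phi, Ne, OnePoint.coe_eq_coe]
        exact hz j
      · intro hx
        have hne : ∀ j, ∃ w : ℂ, (w : P1) = x j := by
          intro j
          match hj : x j with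
          | OnePoint.infty => exact absurd hj (hx j (Set.mem_univ j)).1
          | (w : ℂ) => exact ⟨w, rfl⟩
        choose z hz using hne
        refine ⟨z, fun j h0 => ?_, funext hz⟩
        exact (hx j (Set.mem_univ j)).2 (by rw [← hz j, h0])
    rw [heq2]
    exact dense_pi Set.univ (fun j _ => hD)

end Emb

/-! ### Assembly -/

section Assembly

variable {d : ℕ}

lemma opow_pos_eq {c : ℤ} (hc : 0 < c) : opow c = opowN c.natAbs := by
  unfold opow; rw [if_pos hc]

lemma opow_neg_eq {c : ℤ} (hc : c < 0) : opow c = oinv ∘ opowN c.natAbs := by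
  unfold opow; rw [if_neg (by omega), if_pos hc]

lemma opow_zero_eq : opow 0 = fun _ => ((1:ℂ):P1) := by
  unfold opow; rw [if_neg (by omega), if_neg (by omega)]

lemma build (b : Module.Basis (Fin d) ℤ (Fin d → ℤ)) (m : Fin d → ℤ)
    (HH : Kt d → OnePoint ℂ) (hcont : Continuous HH)
    (hext : ∀ z : Tor d, HH (embB b z) = ((pw m z.1 : ℂ) : OnePoint ℂ))
    (hsm : ∀ x : Kt d, ∃ U ∈ nhds x,
      (∃ f : Kt d → ℂ,
        MDifferentiableOn (𝓘(ℂ, EuclideanSpace ℂ (Fin d))) (𝓘(ℂ, ℂ)) f U ∧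
        ∀ y ∈ U, HH y = (f y : OnePoint ℂ)) ∨
      (∃ f : Kt d → ℂ,
        MDifferentiableOn (𝓘(ℂ, EuclideanSpace ℂ (Fin d))) (𝓘(ℂ, ℂ)) f U ∧
        ∀ y ∈ U, HH y = (if f y = 0 then OnePoint.infty else ((f y)⁻¹ : ℂ)))) :
    Nonempty (ACSV.SmoothCompactToricExtension d m) := by
  obtain ⟨hopen, hdense⟩ := embB_open_dense b
  refine Nonempty.intro (ACSV.SmoothCompactToricExtension.mk (K := Kt d)
    (compact := inferInstance) (t2 := inferInstance) (emb := embB b)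
    (emb_open := hopen) (emb_dense := hdense)
    (act := fun t x i => oscal (pw (fun j => b i j) t.1) (x i))
    (act_cont := ?_) (act_extends := ?_)
    (H := HH) (H_cont := hcont) (H_extends := fun z => hext z) (H_smooth := hsm))
  · intro t
    exact continuous_pi fun i =>
      (continuous_oscal (pw_ne_zero (tor_ne t))).comp (continuous_apply i)
  · intro t z
    funext i
    show oscal (pw (fun j => b i j) t.1) ((pw (fun j => b i j) z.1 : ℂ) : P1) = _
    rw [oscal_coe]
    show _ = ((pw (fun j => b i j) (fun j => t.1 j * z.1 j) : ℂ) : P1)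
    rw [pw_mulz]

end Assembly


end ACSVP
end
end

open ACSV in
/-- Let `H(z) = z^m` be a monomial function on `ℂ_*^d` (`m ∈ ℤ^d`).
Then there exists a compact toric manifold `K` such that `ℂ_*^d` embeds into `K` as an
open dense stratum and the function `H` extends from this stratum to a smooth
`ℙ¹`-valued function on all of `K`. -/
theorem monomial_extends_to_compact_toric_manifold (d : ℕ) (m : Fin d → ℤ) :
    Nonempty (SmoothCompactToricExtension d m) := by
  classical
  by_cases hm : m = 0
  · subst hm
    refine ACSVP.build (Pi.basisFun ℤ (Fin d)) 0 (fun _ => ((1:ℂ) : OnePoint ℂ))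
      continuous_const ?_ ?_
    · intro z
      rw [ACSVP.pw_zero]
    · intro x
      refine ⟨Set.univ, Filter.univ_mem, Or.inl ⟨fun _ => 1, ?_, fun y _ => rfl⟩⟩
      exact contMDiffOn_const.mdifferentiableOn (n := 1) one_ne_zero
  · obtain ⟨b, i0, c, hmc⟩ := ACSVP.exists_basis_row hm
    refine ACSVP.build b m (fun x => ACSVP.opow c (x i0))
      ((ACSVP.continuous_opow c).comp (continuous_apply i0)) ?_ ?_
    · intro z
      show ACSVP.opow c ((ACSVP.pw (fun j => b i0 j) z.1 : ℂ) : ACSVP.P1) = _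
      rw [ACSVP.opow_coe_ne c (ACSVP.pw_ne_zero (ACSVP.tor_ne z)), ← ACSVP.pw_smul]
      rw [hmc]
    · intro x
      set σ := ACSVP.stdsig d x with hσdef
      refine ⟨(ACSVP.chart d σ).source,
        ((ACSVP.chart d σ).open_source).mem_nhds (ChartedSpace.mem_chart_source x), ?_⟩
      set k := c.natAbs with hk
      set f : ACSVP.Kt d → ℂ := fun y => (ACSVP.eqE d (ACSVP.chart d σ y) i0) ^ k with hf
      have hmd : MDifferentiableOn (𝓘(ℂ, EuclideanSpace ℂ (Fin d))) (𝓘(ℂ, ℂ)) f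
          (ACSVP.chart d σ).source := by
        have h1 : ContMDiffOn (𝓘(ℂ, EuclideanSpace ℂ (Fin d)))
            (𝓘(ℂ, EuclideanSpace ℂ (Fin d))) (⊤ : ℕ∞) (ACSVP.chart d σ)
            (ACSVP.chart d σ).source := contMDiffOn_chart
        have h2 : ContMDiff (𝓘(ℂ, EuclideanSpace ℂ (Fin d))) (𝓘(ℂ, ℂ)) (⊤ : ℕ∞)
            (fun u : EuclideanSpace ℂ (Fin d) => (ACSVP.eqE d u i0) ^ k) := by
          rw [contMDiff_iff_contDiff]
          exact (((ContinuousLinearMap.proj i0).comp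
            (ACSVP.eqE d).toContinuousLinearMap).contDiff).pow k
        exact (h2.comp_contMDiffOn h1).mdifferentiableOn (by simp)
      have hwy : ∀ y ∈ (ACSVP.chart d σ).source,
          y i0 = if σ i0 then ACSVP.oinv ((ACSVP.eqE d (ACSVP.chart d σ y) i0 : ℂ) : ACSVP.P1)
            else ((ACSVP.eqE d (ACSVP.chart d σ y) i0 : ℂ) : ACSVP.P1) := by
        intro y hy
        conv_lhs => rw [← (ACSVP.chart d σ).left_inv hy]
        rfl
      have hfy : ∀ y, f y = (ACSVP.eqE d (ACSVP.chart d σ y) i0) ^ k := fun y => rfl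
      rcases lt_trichotomy c 0 with hc|hc|hc
      · -- c < 0
        have hkne0 : k ≠ 0 := Int.natAbs_ne_zero.mpr (by omega)
        have hkc : ((k:ℤ)) = -c := by omega
        by_cases hσ0 : σ i0 = true
        · refine Or.inl ⟨f, hmd, ?_⟩
          intro y hy
          show ACSVP.opow c (y i0) = _
          rw [hwy y hy, if_pos hσ0, hfy]
          set w := ACSVP.eqE d (ACSVP.chart d σ y) i0 with hw
          by_cases hw0 : w = 0
          · rw [hw0, zero_pow hkne0, ACSVP.oinv_coe, if_pos rfl, ACSVP.opow_neg_eq hc]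
            show ACSVP.oinv (ACSVP.opowN k OnePoint.infty) = _
            rw [ACSVP.opowN_infty, ACSVP.oinv_infty]
          · rw [ACSVP.oinv_coe_ne _ hw0, ACSVP.opow_coe_ne c (inv_ne_zero hw0)]
            congr 1
            rw [inv_zpow, ← zpow_neg, ← hkc, zpow_natCast]
        · refine Or.inr ⟨f, hmd, ?_⟩
          intro y hy
          show ACSVP.opow c (y i0) = _
          rw [hwy y hy, if_neg hσ0, hfy]
          set w := ACSVP.eqE d (ACSVP.chart d σ y) i0 with hw
          by_cases hw0 : w = 0
          · rw [hw0, zero_pow hkne0, if_pos rfl, ACSVP.opow_neg_eq hc]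
            show ACSVP.oinv (ACSVP.opowN k ((0:ℂ) : ACSVP.P1)) = OnePoint.infty
            rw [ACSVP.opowN_coe, zero_pow hkne0, ACSVP.oinv_coe, if_pos rfl]
          · rw [ACSVP.opow_coe_ne c hw0, if_neg (pow_ne_zero k hw0)]
            congr 1
            rw [← zpow_natCast w k, hkc, zpow_neg, inv_inv]
      · -- c = 0
        refine Or.inl ⟨f, hmd, ?_⟩
        intro y hy
        show ACSVP.opow c (y i0) = _
        rw [hc, ACSVP.opow_zero_eq, hfy]
        have hk0 : k = 0 := by omega
        rw [hk0, pow_zero]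
      · -- c > 0
        have hkne0 : k ≠ 0 := Int.natAbs_ne_zero.mpr (by omega)
        have hkc : ((k:ℤ)) = c := by omega
        by_cases hσ0 : σ i0 = true
        · refine Or.inr ⟨f, hmd, ?_⟩
          intro y hy
          show ACSVP.opow c (y i0) = _
          rw [hwy y hy, if_pos hσ0, hfy]
          set w := ACSVP.eqE d (ACSVP.chart d σ y) i0 with hw
          by_cases hw0 : w = 0
          · rw [hw0, zero_pow hkne0, if_pos rfl, ACSVP.oinv_coe, if_pos rfl,
              ACSVP.opow_pos_eq hc, ACSVP.opowN_infty]
          · rw [ACSVP.oinv_coe_ne _ hw0, ACSVP.opow_coe_ne c (inv_ne_zero hw0),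
              if_neg (pow_ne_zero k hw0)]
            congr 1
            rw [inv_zpow, ← zpow_natCast w k, hkc]
        · refine Or.inl ⟨f, hmd, ?_⟩
          intro y hy
          show ACSVP.opow c (y i0) = _
          rw [hwy y hy, if_neg hσ0, hfy, ACSVP.opow_pos_eq hc]
          set w := ACSVP.eqE d (ACSVP.chart d σ y) i0 with hw
          show ACSVP.opowN k ((w : ℂ) : ACSVP.P1) = _
          rw [ACSVP.opowN_coe]
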